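/- The rewriting system on words over {H, E} ∪ {W_i : i ∈ ℕ} with rules H·W_i → W_{i+1}·H, H·E → E·H, W_i·W_j → W_j·W_i (i < j), and W_i·W_i → W_i is terminating. -/

import Mathlib

/-- Letters of the alphabet: `H`, `E` and `W i` for `i : ℕ`. -/
inductive Letter
  | H : Letter
  | E : Letter
  | W : ℕ → Letter

open Letter

/-- One rewriting step: a factor matching the left-hand side of a rule is
replaced by the right-hand side, anywhere in the word. -/
inductive Step : List Letter → List Letter → Prop
  | hw (u v : List Letter) (i : ℕ) :
      Step (u ++ [H, W i] ++ v) (u ++ [W (i + 1), H] ++ v)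
  | he (u v : List Letter) :
      Step (u ++ [H, E] ++ v) (u ++ [E, H] ++ v)
  | ww (u v : List Letter) (i j : ℕ) (hij : i < j) :
      Step (u ++ [W i, W j] ++ v) (u ++ [W j, W i] ++ v)
  | wii (u v : List Letter) (i : ℕ) :
      Step (u ++ [W i, W i] ++ v) (u ++ [W i] ++ v)

/-- Interpretation of a letter as a strictly monotone function on ℕ. -/
def val : Letter → ℕ → ℕ
  | Letter.H, x => 2 * x
  | Letter.E, x => x + 1
  | Letter.W i, x => 2 * x + 2 ^ i + 1

/-- Measure of a word. -/
def mu (w : List Letter) : ℕ := w.foldr val 0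

lemma val_mono (a : Letter) {x y : ℕ} (h : x < y) : val a x < val a y := by
  cases a with
  | H => simp only [val]; omega
  | E => simp only [val]; omega
  | W i => simp only [val]; set c := (2:ℕ) ^ i with hc; omega

lemma foldr_mono (u : List Letter) {x y : ℕ} (h : x < y) :
    u.foldr val x < u.foldr val y := by
  induction u with
  | nil => exact h
  | cons a u ih => exact val_mono a ih

lemma step_mu {w w' : List Letter} (h : Step w w') : mu w' < mu w := by
  cases h with
  | hw u v i =>
      simp only [mu, List.foldr_append, List.foldr]
      apply foldr_mono
      set x := v.foldr val 0 with hx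
      simp only [val, pow_succ]
      set c := (2:ℕ) ^ i with hc
      omega
  | he u v =>
      simp only [mu, List.foldr_append, List.foldr]
      apply foldr_mono
      simp only [val]
      omega
  | ww u v i j hij =>
      simp only [mu, List.foldr_append, List.foldr]
      apply foldr_mono
      set x := v.foldr val 0 with hx
      simp only [val]
      have : (2:ℕ) ^ i < 2 ^ j := Nat.pow_lt_pow_right (by norm_num) hij
      set ci := (2:ℕ) ^ i with hci
      set cj := (2:ℕ) ^ j with hcj
      omega
  | wii u v i =>
      simp only [mu, List.foldr_append, List.foldr]
      apply foldr_mono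
      set x := v.foldr val 0 with hx
      simp only [val]
      have : 0 < (2:ℕ) ^ i := Nat.pow_pos (by norm_num)
      set c := (2:ℕ) ^ i with hc
      omega

/-- The rewriting system (with the idempotency rule `W i · W i → W i` added) is
terminating: there is no infinite sequence of rewriting steps. -/
theorem step_terminating :
    ∀ f : ℕ → List Letter, ¬ (∀ n, Step (f n) (f (n + 1))) := by
  intro f hf
  have hdec : ∀ n, mu (f (n + 1)) < mu (f n) := fun n => step_mu (hf n)
  have : ∀ n, mu (f n) + n ≤ mu (f 0) := by
    intro n
    induction n with
    | zero => simp
    | succ n ih => have := hdec n; omega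
  have := this (mu (f 0) + 1)
  omega
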